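/- Let Z be a right-continuous process bounded in absolute value by a uniformly integrable martingale (in particular, sup_{t≥0}|Z(t)| is integrable). Then limsup_{ε↓0} sup_{τ stopping time} E[|Z(τ∧T) − Z(τ∧(T+ε))| 1_{T<τ}] = 0. -/

import Mathlib

open MeasureTheory Filter Set Topology
open scoped NNReal ENNReal

section aux

variable {Ω : Type*} {m0 : MeasurableSpace Ω} {P : Measure Ω} [IsProbabilityMeasure P]
  {ℱ : Filtration ℝ m0} {M : ℝ → Ω → ℝ}

private lemma abs_sub_le' (a b : ℝ) : |a - b| ≤ |a| + |b| := abs_sub a b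

private lemma measE (hm : ∀ s : ℝ, Measurable (M s)) (lam : ℝ) :
    ∀ l : List ℝ, MeasurableSet {ω | ∃ s ∈ l, lam ≤ |M s ω|} := by
  intro l
  induction l with
  | nil => simp
  | cons a l ih =>
    have hset : {ω | ∃ s ∈ a :: l, lam ≤ |M s ω|}
        = {ω | lam ≤ |M a ω|} ∪ {ω | ∃ s ∈ l, lam ≤ |M s ω|} := by
      ext ω
      simp only [List.mem_cons, mem_setOf_eq, mem_union]
      constructor
      · rintro ⟨s, (rfl | hs), h⟩
        · exact Or.inl h
        · exact Or.inr ⟨s, hs, h⟩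
      · rintro (h | ⟨s, hs, h⟩)
        · exact ⟨a, Or.inl rfl, h⟩
        · exact ⟨s, Or.inr hs, h⟩
    rw [hset]
    exact (measurableSet_le measurable_const (hm a).abs).union ih

private lemma list_maximal (hM : Martingale M ℱ P) {lam : ℝ} (hlam : 0 < lam) :
    ∀ l : List ℝ, l.Pairwise (· ≤ ·) → ∀ t : ℝ, (∀ s ∈ l, s ≤ t) →
      ∀ D : Set Ω, (∀ s ∈ l, MeasurableSet[ℱ s] D) →
      lam * (P ({ω | ∃ s ∈ l, lam ≤ |M s ω|} \ D)).toReal ≤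
        ∫ ω in {ω | ∃ s ∈ l, lam ≤ |M s ω|} \ D, |M t ω| ∂P := by
  intro l
  induction l with
  | nil => intro _ t _ D _; simp
  | cons a l ih =>
    intro hsort t ht D hD
    have hm : ∀ s : ℝ, Measurable (M s) := fun s => ((hM.stronglyAdapted s).mono (ℱ.le s)).measurable
    set A : Set Ω := {ω | lam ≤ |M a ω|} with hAdef
    have hAf : MeasurableSet[ℱ a] A := by
      have hm1 : Measurable[ℱ a] (M a) := (hM.stronglyAdapted a).measurable
      have hma : Measurable[ℱ a] fun ω => |M a ω| := (continuous_abs.measurable).comp hm1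
      exact hma measurableSet_Ici
    have hDa : MeasurableSet[ℱ a] D := hD a List.mem_cons_self
    have hADf : MeasurableSet[ℱ a] (A \ D) := hAf.diff hDa
    have hADm : MeasurableSet (A \ D) := ℱ.le a _ hADf
    have hE' : MeasurableSet {ω | ∃ s ∈ l, lam ≤ |M s ω|} := measE hm lam l
    have hAm : MeasurableSet A := ℱ.le a _ hAf
    have hDm : MeasurableSet D := ℱ.le a _ hDa
    set B : Set Ω := {ω | ∃ s ∈ l, lam ≤ |M s ω|} \ (A ∪ D) with hBdef
    have hBm : MeasurableSet B := hE'.diff (hAm.union hDm)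
    have hsplit : {ω | ∃ s ∈ a :: l, lam ≤ |M s ω|} \ D = (A \ D) ∪ B := by
      ext ω
      simp only [hAdef, hBdef, List.mem_cons, mem_setOf_eq, mem_union, mem_diff]
      constructor
      · rintro ⟨⟨s, (rfl | hs), h⟩, hωD⟩
        · exact Or.inl ⟨h, hωD⟩
        · by_cases hA : lam ≤ |M a ω|
          · exact Or.inl ⟨hA, hωD⟩
          · exact Or.inr ⟨⟨s, hs, h⟩, fun hc => hc.elim hA hωD⟩
      · rintro (⟨h, hωD⟩ | ⟨⟨s, hs, h⟩, hc⟩)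
        · exact ⟨⟨a, Or.inl rfl, h⟩, hωD⟩
        · exact ⟨⟨s, Or.inr hs, h⟩, fun hd => hc (Or.inr hd)⟩
    have hdisj : Disjoint (A \ D) B := by
      refine Set.disjoint_left.mpr ?_
      rintro ω ⟨hωA, _⟩ ⟨_, hωn⟩
      exact hωn (Or.inl hωA)
    have h1 : lam * (P (A \ D)).toReal ≤ ∫ ω in A \ D, |M a ω| ∂P :=
      setIntegral_ge_of_const_le_real hADm (measure_ne_top _ _) (fun ω hω => hω.1)
        ((hM.integrable a).abs.integrableOn)
    have h2 : ∫ ω in A \ D, |M a ω| ∂P ≤ ∫ ω in A \ D, |M t ω| ∂P := by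
      have hae : (fun ω => |M a ω|) =ᵐ[P] fun ω => |(P[M t|ℱ a]) ω| := by
        filter_upwards [hM.condExp_ae_eq (ht a List.mem_cons_self)] with ω h
        rw [h]
      calc ∫ ω in A \ D, |M a ω| ∂P = ∫ ω in A \ D, |(P[M t|ℱ a]) ω| ∂P :=
            integral_congr_ae (ae_restrict_of_ae hae)
        _ ≤ ∫ ω in A \ D, |M t ω| ∂P := setIntegral_abs_condExp_le hADf _
    have hsort' := (List.pairwise_cons.mp hsort)
    have hD' : ∀ s ∈ l, MeasurableSet[ℱ s] (A ∪ D) := fun s hs =>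
      (ℱ.mono (hsort'.1 s hs) _ hAf).union (hD s (List.mem_cons_of_mem a hs))
    have h3 := ih hsort'.2 t (fun s hs => ht s (List.mem_cons_of_mem a hs)) (A ∪ D) hD'
    have hPadd : P ({ω | ∃ s ∈ a :: l, lam ≤ |M s ω|} \ D) = P (A \ D) + P B := by
      rw [hsplit, measure_union hdisj hBm]
    have hIadd : ∫ ω in {ω | ∃ s ∈ a :: l, lam ≤ |M s ω|} \ D, |M t ω| ∂P
        = ∫ ω in A \ D, |M t ω| ∂P + ∫ ω in B, |M t ω| ∂P := by
      rw [hsplit]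
      exact setIntegral_union hdisj hBm ((hM.integrable t).abs.integrableOn)
        ((hM.integrable t).abs.integrableOn)
    rw [hPadd, hIadd, ENNReal.toReal_add (measure_ne_top _ _) (measure_ne_top _ _), mul_add]
    exact add_le_add (h1.trans h2) h3

end aux
private lemma exists_rat_seq (t u : ℝ) (h : t < u) :
    ∃ q : ℕ → ℚ, (∀ n, ((q n : ℝ)) ∈ Ioo t u) ∧ Tendsto (fun n => ((q n : ℝ))) atTop (𝓝 t) := by
  have hsel : ∀ n : ℕ, ∃ qq : ℚ, t < (qq : ℝ) ∧ (qq : ℝ) < min u (t + (u - t) / ((n : ℝ) + 1)) := by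
    intro n
    have h1 : t < t + (u - t) / ((n : ℝ) + 1) := by
      have : 0 < (u - t) / ((n : ℝ) + 1) := div_pos (by linarith) (by positivity)
      linarith
    exact exists_rat_btwn (lt_min h h1)
  choose q hq1 hq2 using hsel
  refine ⟨q, fun n => ⟨hq1 n, lt_of_lt_of_le (hq2 n) (min_le_left _ _)⟩, ?_⟩
  have hupper : Tendsto (fun n : ℕ => t + (u - t) / ((n : ℝ) + 1)) atTop (𝓝 t) := by
    have h0 : Tendsto (fun n : ℕ => (u - t) / ((n : ℝ) + 1)) atTop (𝓝 0) := by
      simpa [div_eq_mul_inv, mul_one_div] using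
        tendsto_one_div_add_atTop_nhds_zero_nat.const_mul (u - t)
    simpa using h0.const_add t
  refine tendsto_of_tendsto_of_tendsto_of_le_of_le tendsto_const_nhds hupper
    (fun n => (hq1 n).le) (fun n => ((hq2 n).trans_le (min_le_right _ _)).le)

section aux2

variable {Ω : Type*} {m0 : MeasurableSpace Ω} {P : Measure Ω} [IsProbabilityMeasure P]
  {ℱ : Filtration ℝ m0} {M : ℝ → Ω → ℝ}

private lemma integral_abs_le (hM : Martingale M ℱ P) {C : ℝ≥0}
    (hC : ∀ t : ℝ, eLpNorm (M t) 1 P ≤ C) (t : ℝ) :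
    ∫ ω, |M t ω| ∂P ≤ (C : ℝ) := by
  have h1 : ∫ ω, |M t ω| ∂P = (eLpNorm (M t) 1 P).toReal := by
    rw [eLpNorm_one_eq_lintegral_enorm]
    simp_rw [← Real.norm_eq_abs]
    exact integral_norm_eq_lintegral_enorm (hM.integrable t).aestronglyMeasurable
  rw [h1]
  exact (ENNReal.toReal_mono ENNReal.coe_ne_top (hC t)).trans (le_of_eq (ENNReal.coe_toReal (r := C)))

end aux2

section aux3

variable {Ω : Type*} {m0 : MeasurableSpace Ω} {P : Measure Ω} [IsProbabilityMeasure P]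
  {ℱ : Filtration ℝ m0} {M : ℝ → Ω → ℝ}

private lemma ae_bdd_rat (hM : Martingale M ℱ P) {C : ℝ≥0}
    (hC : ∀ t : ℝ, eLpNorm (M t) 1 P ≤ C) :
    ∀ᵐ ω ∂P, ∃ n : ℕ, ∀ q : ℚ, |M (q : ℝ) ω| ≤ (n : ℝ) := by
  have hm : ∀ s : ℝ, Measurable (M s) := fun s => ((hM.stronglyAdapted s).mono (ℱ.le s)).measurable
  obtain ⟨e, he⟩ := exists_surjective_nat ℚ
  have key : ∀ n : ℕ, P {ω | ∃ q : ℚ, ((n : ℝ) + 1) ≤ |M (q : ℝ) ω|}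
      ≤ ENNReal.ofReal ((C : ℝ) / ((n : ℝ) + 1)) := by
    intro n
    set lam : ℝ := (n : ℝ) + 1 with hlamdef
    have hlam : 0 < lam := by positivity
    set L : ℕ → List ℝ := fun k =>
      ((Finset.range k).image (fun i => ((e i : ℚ) : ℝ))).sort (· ≤ ·) with hLdef
    have hLmem : ∀ k s, s ∈ L k ↔ ∃ i < k, ((e i : ℚ) : ℝ) = s := by
      intro k s
      rw [hLdef]
      simp [Finset.mem_sort, Finset.mem_image, Finset.mem_range]
    set Ek : ℕ → Set Ω := fun k => {ω | ∃ s ∈ L k, lam ≤ |M s ω|} with hEkdef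
    have hUnion : {ω | ∃ q : ℚ, lam ≤ |M (q : ℝ) ω|} = ⋃ k, Ek k := by
      ext ω
      simp only [mem_setOf_eq, mem_iUnion, hEkdef]
      constructor
      · rintro ⟨q, hq⟩
        obtain ⟨i, rfl⟩ := he q
        exact ⟨i + 1, ((e i : ℚ) : ℝ), (hLmem _ _).2 ⟨i, Nat.lt_succ_self i, rfl⟩, hq⟩
      · rintro ⟨k, s, hs, h⟩
        obtain ⟨i, _, rfl⟩ := (hLmem _ _).1 hs
        exact ⟨e i, h⟩
    have hdir : Directed (· ⊆ ·) Ek := by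
      have hmono : Monotone Ek := by
        intro j k hjk ω hω
        obtain ⟨s, hs, h⟩ := hω
        obtain ⟨i, hi, rfl⟩ := (hLmem _ _).1 hs
        exact ⟨_, (hLmem _ _).2 ⟨i, lt_of_lt_of_le hi hjk, rfl⟩, h⟩
      exact hmono.directed_le
    have hEk : ∀ k, P (Ek k) ≤ ENNReal.ofReal ((C : ℝ) / lam) := by
      intro k
      by_cases hne : ((Finset.range k).image (fun i => ((e i : ℚ) : ℝ))).Nonempty
      · set t := ((Finset.range k).image (fun i => ((e i : ℚ) : ℝ))).max' hne with htdef
        have ht : ∀ s ∈ L k, s ≤ t := fun s hs =>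
          Finset.le_max' _ s ((Finset.mem_sort _).1 hs)
        have hmax := list_maximal hM hlam (L k) (Finset.pairwise_sort ..) t ht ∅
          (fun s _ => @MeasurableSet.empty _ (ℱ s))
        simp only [diff_empty] at hmax
        have h2 : ∫ ω in {ω | ∃ s ∈ L k, lam ≤ |M s ω|}, |M t ω| ∂P ≤ ∫ ω, |M t ω| ∂P :=
          setIntegral_le_integral (hM.integrable t).abs
            (Eventually.of_forall fun ω => abs_nonneg _)
        have hle : lam * (P (Ek k)).toReal ≤ (C : ℝ) :=
          hmax.trans (h2.trans (integral_abs_le hM hC t))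
        rw [ENNReal.le_ofReal_iff_toReal_le (measure_ne_top _ _) (by positivity)]
        rw [le_div_iff₀ hlam, mul_comm]
        exact hle
      · have : Ek k = ∅ := by
          rw [Finset.not_nonempty_iff_eq_empty] at hne
          rw [hEkdef]
          ext ω
          simp only [mem_setOf_eq, mem_empty_iff_false, iff_false, not_exists]
          rw [hLdef]
          simp [hne]
        rw [this]
        simp
    rw [hUnion, hdir.measure_iUnion]
    exact iSup_le hEk
  have hnull : P (⋂ n : ℕ, {ω | ∃ q : ℚ, ((n : ℝ) + 1) ≤ |M (q : ℝ) ω|}) = 0 := by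
    refine le_antisymm ?_ zero_le
    have htend : Tendsto (fun n : ℕ => ENNReal.ofReal ((C : ℝ) / ((n : ℝ) + 1))) atTop (𝓝 0) := by
      rw [← ENNReal.ofReal_zero]
      apply ENNReal.tendsto_ofReal
      simpa [div_eq_mul_inv, mul_one_div] using
        tendsto_one_div_add_atTop_nhds_zero_nat.const_mul (C : ℝ)
    exact ge_of_tendsto' htend fun n => (measure_mono (iInter_subset _ n)).trans (key n)
  rw [ae_iff]
  refine measure_mono_null ?_ hnull
  intro ω hω
  simp only [mem_setOf_eq, not_exists, not_forall, not_le] at hω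
  refine mem_iInter.2 fun n => ?_
  obtain ⟨q, hq⟩ := hω (n + 1)
  refine ⟨q, ?_⟩
  push_cast at hq
  linarith

end aux3

/-- If `Z` is a right-continuous adapted process bounded in absolute value by a uniformly
integrable martingale `M`, then
`limsup_{ε↓0} sup_{τ stopping time} E[|Z(τ∧T) − Z(τ∧(T+ε))| 1_{T<τ}] = 0`. -/
theorem stmt_5 {Ω : Type*} {m0 : MeasurableSpace Ω} (P : Measure Ω) [IsProbabilityMeasure P]
    (ℱ : Filtration ℝ m0)
    (Z : ℝ → Ω → ℝ) (hadp : Adapted ℱ Z)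
    (hrc : ∀ ω, ∀ t : ℝ, ContinuousWithinAt (fun s => Z s ω) (Set.Ici t) t)
    (M : ℝ → Ω → ℝ) (hM : Martingale M ℱ P) (hUI : UniformIntegrable M 1 P)
    (hbd : ∀ t, ∀ᵐ ω ∂P, |Z t ω| ≤ M t ω)
    (hsupint : Integrable (fun ω => ⨆ t : ℝ, |Z t ω|) P)
    (T : ℝ) (hT : 0 < T) :
    Filter.limsup
      (fun ε : ℝ => ⨆ τ : {τ : Ω → ℝ // IsStoppingTime ℱ (fun ω => (τ ω : WithTop ℝ))},
        ∫ ω, (if T < τ.1 ω then |Z (min (τ.1 ω) T) ω - Z (min (τ.1 ω) (T + ε)) ω| else 0) ∂P)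
      (nhdsWithin 0 (Set.Ioi 0)) = 0 := by
  classical
  have hmZ : ∀ t : ℝ, Measurable (Z t) := fun t => ((hadp t).mono (ℱ.le t) le_rfl)
  obtain ⟨hmeas, hunif, C, hC⟩ := hUI
  have haeM := ae_bdd_rat hM hC
  have hZQ : ∀ᵐ ω ∂P, ∀ q : ℚ, |Z (q : ℝ) ω| ≤ M (q : ℝ) ω := ae_all_iff.2 fun q => hbd q
  -- a.e., every |Z t ω| is dominated by the (integrable) pointwise supremum
  have haeG : ∀ᵐ ω ∂P, ∀ t : ℝ, |Z t ω| ≤ ⨆ s : ℝ, |Z s ω| := by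
    filter_upwards [haeM, hZQ] with ω hn hq
    obtain ⟨n, hn⟩ := hn
    have hb : ∀ t : ℝ, |Z t ω| ≤ (n : ℝ) := by
      intro t
      obtain ⟨qs, hmem, hqt⟩ := exists_rat_seq t (t + 1) (lt_add_one t)
      have htend : Tendsto (fun j => Z ((qs j : ℝ)) ω) atTop (𝓝 (Z t ω)) := by
        apply (hrc ω t).tendsto.comp
        rw [tendsto_nhdsWithin_iff]
        exact ⟨hqt, Eventually.of_forall fun j => (hmem j).1.le⟩
      refine le_of_tendsto htend.abs (Eventually.of_forall fun j => ?_)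
      exact (hq (qs j)).trans ((le_abs_self _).trans (hn (qs j)))
    have hbdd : BddAbove (range fun t : ℝ => |Z t ω|) := by
      refine ⟨(n : ℝ), ?_⟩
      rintro x ⟨t, rfl⟩
      exact hb t
    exact fun t => le_ciSup hbdd t
  -- the dominating modulus process
  set w : ℝ → Ω → ℝ≥0∞ := fun ε ω =>
    max (⨆ q : ℚ, if ((q : ℝ)) ∈ Ioc T (T + ε) then ENNReal.ofReal |Z T ω - Z ((q : ℝ)) ω| else 0)
      (ENNReal.ofReal |Z T ω - Z (T + ε) ω|) with hwdef
  have hwmeas : ∀ ε : ℝ, Measurable (w ε) := by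
    intro ε
    refine Measurable.max ?_ (((hmZ T).sub (hmZ (T + ε))).abs.ennreal_ofReal)
    refine Measurable.iSup fun q => ?_
    split_ifs with h
    · exact ((hmZ T).sub (hmZ ((q : ℝ)))).abs.ennreal_ofReal
    · exact measurable_const
  -- integrable bound
  have hZTint : Integrable (Z T) P :=
    (hM.integrable T).mono' ((hadp T).mono (ℱ.le T) le_rfl).aestronglyMeasurable
      (by filter_upwards [hbd T] with ω h using by rwa [Real.norm_eq_abs])
  set bound : Ω → ℝ≥0∞ := fun ω => ENNReal.ofReal (|Z T ω| + ⨆ s : ℝ, |Z s ω|) with hbndef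
  have hbfin : ∫⁻ ω, bound ω ∂P ≠ ⊤ := by
    have hint : Integrable (fun ω => |Z T ω| + ⨆ s : ℝ, |Z s ω|) P := hZTint.abs.add hsupint
    have hle : ∫⁻ ω, bound ω ∂P ≤ ∫⁻ ω, (‖|Z T ω| + ⨆ s : ℝ, |Z s ω|‖₊ : ℝ≥0∞) ∂P := by
      refine lintegral_mono fun ω => ?_
      rw [hbndef]
      calc ENNReal.ofReal (|Z T ω| + ⨆ s : ℝ, |Z s ω|)
          ≤ ENNReal.ofReal ‖|Z T ω| + ⨆ s : ℝ, |Z s ω|‖ :=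
            ENNReal.ofReal_le_ofReal (le_abs_self _)
        _ = (‖|Z T ω| + ⨆ s : ℝ, |Z s ω|‖₊ : ℝ≥0∞) := by rw [ofReal_norm, enorm_eq_nnnorm]
    exact (lt_of_le_of_lt hle hint.2).ne
  have hbound_ae : ∀ ε : ℝ, ∀ᵐ ω ∂P, w ε ω ≤ bound ω := by
    intro ε
    filter_upwards [haeG] with ω hω
    have hone : ∀ s : ℝ, ENNReal.ofReal |Z T ω - Z s ω| ≤ bound ω := by
      intro s
      rw [hbndef]
      exact ENNReal.ofReal_le_ofReal ((abs_sub _ _).trans (add_le_add le_rfl (hω s)))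
    refine max_le (iSup_le fun q => ?_) (hone (T + ε))
    split_ifs with h
    · exact hone _
    · exact zero_le
  -- pointwise convergence of the modulus
  have hlim : ∀ ω, Tendsto (fun ε => w ε ω) (𝓝[>] (0 : ℝ)) (𝓝 0) := by
    intro ω
    rw [ENNReal.tendsto_nhds_zero]
    intro η hη
    obtain ⟨δ, hδ0, hδη⟩ : ∃ δ : ℝ, 0 < δ ∧ ENNReal.ofReal δ ≤ η := by
      refine ⟨(min 1 η).toReal, ?_, ?_⟩
      · refine ENNReal.toReal_pos ?_ ?_
        · exact (lt_min one_pos hη).ne'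
        · exact ((min_le_left _ _).trans_lt ENNReal.one_lt_top).ne
      · rw [ENNReal.ofReal_toReal ((min_le_left _ _).trans_lt ENNReal.one_lt_top).ne]
        exact min_le_right _ _
    have h1 := hrc ω T
    rw [Metric.continuousWithinAt_iff] at h1
    obtain ⟨d, hd0, hd⟩ := h1 δ hδ0
    filter_upwards [Ioo_mem_nhdsGT_of_mem (⟨le_refl (0 : ℝ), hd0⟩ : (0 : ℝ) ∈ Ico 0 d)]
      with ε hε
    have hcomp : ∀ s : ℝ, s ∈ Ioc T (T + ε) → ENNReal.ofReal |Z T ω - Z s ω| ≤ η := by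
      intro s hs
      refine le_trans (ENNReal.ofReal_le_ofReal ?_) hδη
      have hdist : dist s T < d := by
        rw [Real.dist_eq, abs_of_nonneg (by linarith [hs.1])]
        linarith [hs.2, hε.2]
      have := hd (le_of_lt hs.1) hdist
      rw [Real.dist_eq] at this
      rw [abs_sub_comm]
      exact this.le
    refine max_le (iSup_le fun q => ?_)
      (hcomp _ ⟨lt_add_of_pos_right T hε.1, le_refl _⟩)
    split_ifs with h
    · exact hcomp _ h
    · exact zero_le
  -- pointwise domination of the stopping-time integrand
  have hdom : ∀ ε : ℝ, 0 < ε → ∀ (τ : Ω → ℝ) (ω : Ω),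
      ENNReal.ofReal (if T < τ ω then |Z (min (τ ω) T) ω - Z (min (τ ω) (T + ε)) ω| else 0)
        ≤ w ε ω := by
    intro ε hε τ ω
    split_ifs with hτ
    · have hminT : min (τ ω) T = T := min_eq_right hτ.le
      set s : ℝ := min (τ ω) (T + ε) with hsdef
      have hsIoc : s ∈ Ioc T (T + ε) :=
        ⟨lt_min hτ (lt_add_of_pos_right T hε), min_le_right _ _⟩
      rw [hminT]
      rcases eq_or_lt_of_le hsIoc.2 with heq | hlt
      · rw [heq]
        exact le_max_right _ _
      · obtain ⟨qs, hmem, hqt⟩ := exists_rat_seq s (T + ε) hlt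
        have htZ : Tendsto (fun j => Z ((qs j : ℝ)) ω) atTop (𝓝 (Z s ω)) := by
          apply (hrc ω s).tendsto.comp
          rw [tendsto_nhdsWithin_iff]
          exact ⟨hqt, Eventually.of_forall fun j => (hmem j).1.le⟩
        have htend : Tendsto (fun j => ENNReal.ofReal |Z T ω - Z ((qs j : ℝ)) ω|) atTop
            (𝓝 (ENNReal.ofReal |Z T ω - Z s ω|)) :=
          ENNReal.tendsto_ofReal (tendsto_const_nhds.sub htZ).abs
        refine le_of_tendsto htend (Eventually.of_forall fun j => ?_)
        have hmemIoc : ((qs j : ℝ)) ∈ Ioc T (T + ε) :=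
          ⟨hsIoc.1.trans (hmem j).1, (hmem j).2.le⟩
        refine le_trans ?_ (le_max_left _ _)
        have hsup := le_iSup
          (fun q : ℚ => if ((q : ℝ)) ∈ Ioc T (T + ε) then ENNReal.ofReal |Z T ω - Z ((q : ℝ)) ω|
            else 0) (qs j)
        rwa [if_pos hmemIoc] at hsup
    · simp
  -- compare the suprema with the lintegral of the modulus
  haveI hτne : Nonempty {τ : Ω → ℝ // IsStoppingTime ℱ (fun ω => (τ ω : WithTop ℝ))} :=
    ⟨⟨fun _ => (0 : ℝ), isStoppingTime_const ℱ 0⟩⟩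
  set S : ℝ → ℝ := fun ε => ⨆ τ : {τ : Ω → ℝ // IsStoppingTime ℱ (fun ω => (τ ω : WithTop ℝ))},
      ∫ ω, (if T < τ.1 ω then |Z (min (τ.1 ω) T) ω - Z (min (τ.1 ω) (T + ε)) ω| else 0) ∂P
    with hSdef
  have hS0 : ∀ ε : ℝ, 0 ≤ S ε := by
    intro ε
    refine Real.iSup_nonneg fun τ => integral_nonneg fun ω => ?_
    dsimp only
    split_ifs
    · exact abs_nonneg _
    · exact le_refl 0
  have hwfin : ∀ ε : ℝ, ∫⁻ ω, w ε ω ∂P ≠ ⊤ := fun ε =>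
    ne_top_of_le_ne_top hbfin (lintegral_mono_ae (hbound_ae ε))
  have hSle : ∀ ε : ℝ, 0 < ε → S ε ≤ (∫⁻ ω, w ε ω ∂P).toReal := by
    intro ε hε
    refine ciSup_le fun τ => ?_
    set f : Ω → ℝ := fun ω =>
      if T < τ.1 ω then |Z (min (τ.1 ω) T) ω - Z (min (τ.1 ω) (T + ε)) ω| else 0 with hfdef
    have hf0 : 0 ≤ᵐ[P] f := Eventually.of_forall fun ω => by
      rw [hfdef]
      dsimp only
      split_ifs
      · exact abs_nonneg _
      · exact le_refl 0
    by_cases hfi : Integrable f P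
    · rw [integral_eq_lintegral_of_nonneg_ae hf0 hfi.aestronglyMeasurable]
      refine ENNReal.toReal_mono (hwfin ε) (lintegral_mono fun ω => ?_)
      exact hdom ε hε τ.1 ω
    · rw [integral_undef hfi]
      exact ENNReal.toReal_nonneg
  have hBtend : Tendsto (fun ε : ℝ => (∫⁻ ω, w ε ω ∂P).toReal) (𝓝[>] (0 : ℝ)) (𝓝 0) := by
    have h0 : Tendsto (fun ε : ℝ => ∫⁻ ω, w ε ω ∂P) (𝓝[>] (0 : ℝ)) (𝓝 0) := by
      have := tendsto_lintegral_filter_of_dominated_convergence (μ := P) bound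
        (Eventually.of_forall hwmeas) (Eventually.of_forall hbound_ae) hbfin
        (Eventually.of_forall hlim)
      simpa using this
    have hcont : Tendsto ENNReal.toReal (𝓝 (0 : ℝ≥0∞)) (𝓝 (0 : ℝ)) := by
      simpa using ENNReal.tendsto_toReal (by simp : (0 : ℝ≥0∞) ≠ ⊤)
    exact hcont.comp h0
  have hStend : Tendsto S (𝓝[>] (0 : ℝ)) (𝓝 0) := by
    refine tendsto_of_tendsto_of_tendsto_of_le_of_le' tendsto_const_nhds hBtend
      (Eventually.of_forall hS0) ?_
    filter_upwards [self_mem_nhdsWithin] with ε hε using hSle ε hε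
  exact hStend.limsup_eq
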